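/- For z ∈ ℂ∖(−∞,0] with Re√z > 0 and a > 0, one has (1/(2π²a))·∫₀^∞ r·sin(ra)/(r²+z)² dr = e^{−√z a}/(8π√z). In particular d/dz (−e^{−√z a}/(4πa)) = e^{−√z a}/(8π√z). -/

import Mathlib

open MeasureTheory Real

namespace Stmt14

open Filter Set Topology

noncomputable def Kf (z : ℂ) (a : ℝ) : ℂ :=
  ∫ r in Set.Ioi (0 : ℝ), ((r : ℂ) * (Real.sin (r * a) : ℂ)) / (((r : ℂ) ^ 2 + z) ^ 2)

noncomputable def Mf (z : ℂ) (a : ℝ) : ℂ :=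
  ∫ r in Set.Ioi (0 : ℝ), ((Real.cos (r * a) : ℂ)) / (((r : ℂ) ^ 2 + z) ^ 2)

noncomputable def Jf (z : ℂ) (a : ℝ) : ℂ :=
  ∫ r in Set.Ioi (0 : ℝ), ((Real.cos (r * a) : ℂ)) / ((r : ℂ) ^ 2 + z)

variable {z s : ℂ}

lemma cnorm_ofReal (r : ℝ) : ‖(r : ℂ)‖ = |r| := by
  rw [Complex.norm_real, Real.norm_eq_abs]

lemma z_ne (hs2 : s ^ 2 = z) (hsre : 0 < s.re) : z ≠ 0 := by
  intro h
  rw [h, pow_eq_zero_iff two_ne_zero] at hs2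
  rw [hs2] at hsre
  simp at hsre

lemma s_ne (hsre : 0 < s.re) : s ≠ 0 := by
  intro h; rw [h] at hsre; simp at hsre

lemma denom_ne (hs2 : s ^ 2 = z) (hsre : 0 < s.re) (r : ℝ) : ((r : ℂ) ^ 2 + z) ≠ 0 := by
  intro h
  have h1 : z = -((r : ℂ) ^ 2) := by linear_combination h
  rw [h1] at hs2
  have hre : (s ^ 2).re = -(r ^ 2) := by
    rw [hs2]; simp [← Complex.ofReal_pow]
  have him : (s ^ 2).im = 0 := by
    rw [hs2]; simp [← Complex.ofReal_pow]
  rw [pow_two, Complex.mul_re] at hre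
  rw [pow_two, Complex.mul_im] at him
  have him0 : s.im = 0 := by nlinarith
  nlinarith

/-- Uniform lower bound for the denominator. -/
lemma abs_lower (hs2 : s ^ 2 = z) (hsre : 0 < s.re) :
    ∃ c > 0, ∀ r : ℝ, c * (1 + r ^ 2) ≤ ‖(r : ℂ) ^ 2 + z‖ := by
  have hz0 : z ≠ 0 := z_ne hs2 hsre
  have habs : 0 < ‖z‖ := by simpa using hz0
  have hre : ∀ r : ℝ, ((r : ℂ) ^ 2 + z).re = r ^ 2 + z.re := by
    intro r; simp [Complex.add_re, ← Complex.ofReal_pow]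
  have him : ∀ r : ℝ, ((r : ℂ) ^ 2 + z).im = z.im := by
    intro r; simp [Complex.add_im, ← Complex.ofReal_pow]
  rcases le_or_gt 0 z.re with hzre | hzre
  · refine ⟨min (‖z‖ / 2) (1 / 2), by positivity, fun r => ?_⟩
    have h1 : (r : ℝ) ^ 2 ≤ ‖(r : ℂ) ^ 2 + z‖ := by
      have := Complex.re_le_norm ((r : ℂ) ^ 2 + z)
      rw [hre r] at this; linarith
    have h2 : ‖z‖ ≤ ‖(r : ℂ) ^ 2 + z‖ := by
      have hsq : Complex.normSq z ≤ Complex.normSq ((r : ℂ) ^ 2 + z) := by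
        rw [Complex.normSq_apply, Complex.normSq_apply, hre r, him r]
        nlinarith [sq_nonneg r]
      have := Real.sqrt_le_sqrt hsq
      rwa [← Complex.norm_def, ← Complex.norm_def] at this
    have hm1 : min (‖z‖ / 2) (1 / 2) ≤ ‖z‖ / 2 := min_le_left _ _
    have hm2 : min (‖z‖ / 2) (1 / 2) ≤ 1 / 2 := min_le_right _ _
    have hm0 : (0:ℝ) < min (‖z‖ / 2) (1 / 2) := by positivity
    nlinarith [sq_nonneg r]
  · have hzim : z.im ≠ 0 := by
      intro h0
      apply denom_ne hs2 hsre (Real.sqrt (-z.re))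
      have : ((Real.sqrt (-z.re) : ℂ)) ^ 2 = ((-z.re : ℝ) : ℂ) := by
        rw [← Complex.ofReal_pow, Real.sq_sqrt (by linarith)]
      rw [this]
      apply Complex.ext <;> simp [h0]
    have him0 : 0 < |z.im| := abs_pos.mpr hzim
    refine ⟨min (|z.im| / (2 + 2 * |z.re|)) (1 / 4), by positivity, fun r => ?_⟩
    have habs_im : |z.im| ≤ ‖(r : ℂ) ^ 2 + z‖ := by
      have := Complex.abs_im_le_norm ((r : ℂ) ^ 2 + z)
      rwa [him r] at this
    rcases le_or_gt (r ^ 2) (1 + 2 * |z.re|) with hr | hr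
    · have hm1 : min (|z.im| / (2 + 2 * |z.re|)) (1 / 4) ≤ |z.im| / (2 + 2 * |z.re|) :=
        min_le_left _ _
      have h2 : (0:ℝ) < 2 + 2 * |z.re| := by positivity
      have key : (|z.im| / (2 + 2 * |z.re|)) * (1 + r ^ 2) ≤ |z.im| := by
        rw [div_mul_eq_mul_div, div_le_iff₀ h2]
        nlinarith [abs_nonneg z.im]
      have hm0 : (0:ℝ) < min (|z.im| / (2 + 2 * |z.re|)) (1 / 4) := by positivity
      nlinarith [sq_nonneg r]
    · have h1 : r ^ 2 - |z.re| ≤ ‖(r : ℂ) ^ 2 + z‖ := by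
        have h := Complex.re_le_norm ((r : ℂ) ^ 2 + z)
        rw [hre r] at h
        have := neg_abs_le z.re
        linarith
      have hm2 : min (|z.im| / (2 + 2 * |z.re|)) (1 / 4) ≤ 1 / 4 := min_le_right _ _
      have hm0 : (0:ℝ) < min (|z.im| / (2 + 2 * |z.re|)) (1 / 4) := by positivity
      nlinarith [abs_nonneg z.re]

/-- Master integrability criterion. -/
lemma integrableOn_aux (C : ℝ) {f : ℝ → ℂ}
    (hm : AEStronglyMeasurable f (volume.restrict (Set.Ioi 0)))
    (hb : ∀ r : ℝ, ‖f r‖ ≤ C / (1 + r ^ 2)) : IntegrableOn f (Set.Ioi 0) := by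
  have h1 : Integrable (fun r : ℝ => C * (1 + r ^ 2)⁻¹) := integrable_inv_one_add_sq.const_mul C
  refine Integrable.mono' (h1.restrict (s := Set.Ioi 0)) hm ?_
  filter_upwards with r
  rw [← div_eq_mul_inv]
  exact hb r

lemma norm_aux {c : ℝ} (hc : 0 < c)
    (hlow : ∀ r : ℝ, c * (1 + r ^ 2) ≤ ‖(r : ℂ) ^ 2 + z‖)
    {g : ℝ → ℂ} (hg : ∀ r : ℝ, ‖g r‖ ≤ 1 + r ^ 2) (r : ℝ) :
    ‖g r / (((r : ℂ) ^ 2 + z) ^ 2)‖ ≤ (1 / c ^ 2) / (1 + r ^ 2) := by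
  have h1 : (0:ℝ) < 1 + r ^ 2 := by positivity
  have hd : c * (1 + r ^ 2) ≤ ‖(r : ℂ) ^ 2 + z‖ := hlow r
  have hd0 : 0 < ‖(r : ℂ) ^ 2 + z‖ := lt_of_lt_of_le (by positivity) hd
  rw [norm_div, norm_pow]
  rw [div_le_div_iff₀ (by positivity) h1]
  calc ‖g r‖ * (1 + r ^ 2) ≤ (1 + r ^ 2) * (1 + r ^ 2) := by
        nlinarith [hg r, norm_nonneg (g r)]
    _ ≤ (1 / c ^ 2) * (‖(r : ℂ) ^ 2 + z‖) ^ 2 := by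
        rw [div_mul_eq_mul_div, le_div_iff₀ (by positivity)]
        have hsq := mul_le_mul hd hd (by positivity : (0:ℝ) ≤ c * (1 + r ^ 2)) hd0.le
        nlinarith

lemma norm_aux1 {c : ℝ} (hc : 0 < c)
    (hlow : ∀ r : ℝ, c * (1 + r ^ 2) ≤ ‖(r : ℂ) ^ 2 + z‖)
    {g : ℝ → ℂ} (hg : ∀ r : ℝ, ‖g r‖ ≤ 1) (r : ℝ) :
    ‖g r / ((r : ℂ) ^ 2 + z)‖ ≤ (1 / c) / (1 + r ^ 2) := by
  have h1 : (0:ℝ) < 1 + r ^ 2 := by positivity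
  have hd : c * (1 + r ^ 2) ≤ ‖(r : ℂ) ^ 2 + z‖ := hlow r
  have hd0 : 0 < ‖(r : ℂ) ^ 2 + z‖ := lt_of_lt_of_le (by positivity) hd
  rw [norm_div]
  rw [div_le_div_iff₀ hd0 h1]
  calc ‖g r‖ * (1 + r ^ 2) ≤ 1 * (1 + r ^ 2) := by
        nlinarith [hg r, norm_nonneg (g r)]
    _ ≤ (1 / c) * (‖(r : ℂ) ^ 2 + z‖) := by
        rw [div_mul_eq_mul_div, le_div_iff₀ hc]
        nlinarith


section Integrability

lemma cont_div_pow (hne : ∀ r : ℝ, ((r : ℂ) ^ 2 + z) ≠ 0) {g : ℝ → ℂ} (hg : Continuous g)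
    (n : ℕ) : Continuous fun r : ℝ => g r / ((r : ℂ) ^ 2 + z) ^ n :=
  hg.div (((Complex.continuous_ofReal.pow 2).add continuous_const).pow n)
    (fun r => pow_ne_zero n (hne r))

lemma abs_coe_mul_sin_le (a r : ℝ) :
    ‖(r : ℂ) * (Real.sin (r * a) : ℂ)‖ ≤ 1 + r ^ 2 := by
  rw [norm_mul, cnorm_ofReal, cnorm_ofReal]
  nlinarith [Real.abs_sin_le_one (r * a), abs_nonneg r, sq_abs r, abs_nonneg (Real.sin (r * a)),
    sq_nonneg (|r| - 1)]

lemma abs_cos_le' (a r : ℝ) : ‖(Real.cos (r * a) : ℂ)‖ ≤ 1 + r ^ 2 := by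
  rw [cnorm_ofReal]
  nlinarith [Real.abs_cos_le_one (r * a), sq_nonneg r]

lemma abs_sq_mul_cos_le (a r : ℝ) :
    ‖(r : ℂ) ^ 2 * (Real.cos (r * a) : ℂ)‖ ≤ 1 + r ^ 2 := by
  rw [norm_mul, cnorm_ofReal, norm_pow, cnorm_ofReal]
  nlinarith [Real.abs_cos_le_one (r * a), sq_abs r, sq_nonneg r, abs_nonneg (Real.cos (r * a)),
    sq_nonneg (|r|)]

variable (hs2 : s ^ 2 = z) (hsre : 0 < s.re)
include hs2 hsre

lemma intK (a : ℝ) :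
    IntegrableOn (fun r : ℝ => ((r : ℂ) * (Real.sin (r * a) : ℂ)) / (((r : ℂ) ^ 2 + z) ^ 2))
      (Set.Ioi 0) := by
  obtain ⟨c, hc, hlow⟩ := abs_lower hs2 hsre
  refine integrableOn_aux (1 / c ^ 2) ?_ ?_
  · exact ((cont_div_pow (denom_ne hs2 hsre) (by fun_prop) 2).aestronglyMeasurable)
  · exact norm_aux hc hlow (abs_coe_mul_sin_le a)

lemma intM (a : ℝ) :
    IntegrableOn (fun r : ℝ => ((Real.cos (r * a) : ℂ)) / (((r : ℂ) ^ 2 + z) ^ 2))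
      (Set.Ioi 0) := by
  obtain ⟨c, hc, hlow⟩ := abs_lower hs2 hsre
  refine integrableOn_aux (1 / c ^ 2) ?_ ?_
  · exact ((cont_div_pow (denom_ne hs2 hsre) (by fun_prop) 2).aestronglyMeasurable)
  · exact norm_aux hc hlow (abs_cos_le' a)

lemma intR2 (a : ℝ) :
    IntegrableOn (fun r : ℝ => ((r : ℂ) ^ 2 * (Real.cos (r * a) : ℂ)) / (((r : ℂ) ^ 2 + z) ^ 2))
      (Set.Ioi 0) := by
  obtain ⟨c, hc, hlow⟩ := abs_lower hs2 hsre
  refine integrableOn_aux (1 / c ^ 2) ?_ ?_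
  · exact ((cont_div_pow (denom_ne hs2 hsre) (by fun_prop) 2).aestronglyMeasurable)
  · exact norm_aux hc hlow (abs_sq_mul_cos_le a)

lemma intJ (a : ℝ) :
    IntegrableOn (fun r : ℝ => ((Real.cos (r * a) : ℂ)) / ((r : ℂ) ^ 2 + z)) (Set.Ioi 0) := by
  obtain ⟨c, hc, hlow⟩ := abs_lower hs2 hsre
  refine integrableOn_aux (1 / c) ?_ ?_
  · have := cont_div_pow (z := z) (denom_ne hs2 hsre)
      (g := fun r : ℝ => ((Real.cos (r * a) : ℂ))) (by fun_prop) 1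
    simp only [pow_one] at this
    exact this.aestronglyMeasurable
  · intro r
    exact norm_aux1 (z := z) hc hlow (g := fun r' : ℝ => ((Real.cos (r' * a) : ℂ)))
      (fun r' => by rw [cnorm_ofReal]; exact Real.abs_cos_le_one _) r

lemma intInv : IntegrableOn (fun r : ℝ => ((((r : ℂ) ^ 2 + z) ^ 2)⁻¹)) (Set.Ioi 0) := by
  have h := intM hs2 hsre 0
  simpa [one_div] using h

end Integrability

section Deriv

variable (hs2 : s ^ 2 = z) (hsre : 0 < s.re)
include hs2 hsre

lemma hasDerivAt_Kf (a₀ : ℝ) :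
    HasDerivAt (Kf z)
      (∫ r in Set.Ioi (0 : ℝ), ((r : ℂ) ^ 2 * (Real.cos (r * a₀) : ℂ)) / (((r : ℂ) ^ 2 + z) ^ 2))
      a₀ := by
  obtain ⟨c, hc, hlow⟩ := abs_lower hs2 hsre
  have key := hasDerivAt_integral_of_dominated_loc_of_deriv_le (𝕜 := ℝ) (μ := volume.restrict (Set.Ioi 0))
    (F := fun (a : ℝ) (r : ℝ) => ((r : ℂ) * (Real.sin (r * a) : ℂ)) / (((r : ℂ) ^ 2 + z) ^ 2))
    (F' := fun (a : ℝ) (r : ℝ) => ((r : ℂ) ^ 2 * (Real.cos (r * a) : ℂ)) / (((r : ℂ) ^ 2 + z) ^ 2))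
    (x₀ := a₀) (s := Metric.ball a₀ 1) (bound := fun r => (1 / c ^ 2) / (1 + r ^ 2)) (Metric.ball_mem_nhds a₀ one_pos)
    ?_ ?_ ?_ ?_ ?_ ?_
  · exact key.2
  · exact Eventually.of_forall fun a =>
      ((cont_div_pow (denom_ne hs2 hsre) (by fun_prop) 2).aestronglyMeasurable)
  · exact intK hs2 hsre a₀
  · exact ((cont_div_pow (denom_ne hs2 hsre) (by fun_prop) 2).aestronglyMeasurable)
  · filter_upwards with r
    intro a _
    exact norm_aux hc hlow (fun r' => abs_sq_mul_cos_le a r') r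
  · have : Integrable (fun r : ℝ => (1 / c ^ 2) * (1 + r ^ 2)⁻¹) (volume.restrict (Set.Ioi 0)) :=
      (integrable_inv_one_add_sq.const_mul _).restrict
    simpa [div_eq_mul_inv] using this
  · filter_upwards with r
    intro a _
    have hsin : HasDerivAt (fun a : ℝ => Real.sin (r * a)) (Real.cos (r * a) * r) a := by
      have h1 : HasDerivAt (fun a : ℝ => r * a) r a := by
        simpa using (hasDerivAt_id a).const_mul r
      exact (Real.hasDerivAt_sin (r * a)).comp a h1
    have h2 : HasDerivAt (fun a : ℝ => ((Real.sin (r * a) : ℝ) : ℂ))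
        ((Real.cos (r * a) * r : ℝ) : ℂ) a := hsin.ofReal_comp
    have h3 := h2.const_mul ((r : ℂ) / (((r : ℂ) ^ 2 + z) ^ 2))
    have h4 : (fun a : ℝ => ((r : ℂ) * (Real.sin (r * a) : ℂ)) / (((r : ℂ) ^ 2 + z) ^ 2))
        =ᶠ[nhds a] fun a : ℝ =>
          ((r : ℂ) / (((r : ℂ) ^ 2 + z) ^ 2)) * ((Real.sin (r * a) : ℝ) : ℂ) :=
      Eventually.of_forall fun x => by ring
    refine (h3.congr_of_eventuallyEq h4).congr_deriv ?_
    push_cast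
    ring

lemma hasDerivAt_Mf (a₀ : ℝ) : HasDerivAt (Mf z) (-(Kf z a₀)) a₀ := by
  obtain ⟨c, hc, hlow⟩ := abs_lower hs2 hsre
  have key := hasDerivAt_integral_of_dominated_loc_of_deriv_le (𝕜 := ℝ) (μ := volume.restrict (Set.Ioi 0))
    (F := fun (a : ℝ) (r : ℝ) => ((Real.cos (r * a) : ℂ)) / (((r : ℂ) ^ 2 + z) ^ 2))
    (F' := fun (a : ℝ) (r : ℝ) =>
      -(((r : ℂ) * (Real.sin (r * a) : ℂ)) / (((r : ℂ) ^ 2 + z) ^ 2)))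
    (x₀ := a₀) (s := Metric.ball a₀ 1) (bound := fun r => (1 / c ^ 2) / (1 + r ^ 2)) (Metric.ball_mem_nhds a₀ one_pos)
    ?_ ?_ ?_ ?_ ?_ ?_
  · have h2 := key.2
    have : (∫ r in Set.Ioi (0 : ℝ),
        -(((r : ℂ) * (Real.sin (r * a₀) : ℂ)) / (((r : ℂ) ^ 2 + z) ^ 2))) = -(Kf z a₀) := by
      rw [integral_neg]; rfl
    rwa [this] at h2
  · exact Eventually.of_forall fun a =>
      ((cont_div_pow (denom_ne hs2 hsre) (by fun_prop) 2).aestronglyMeasurable)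
  · exact intM hs2 hsre a₀
  · exact ((cont_div_pow (denom_ne hs2 hsre) (by fun_prop) 2).aestronglyMeasurable).neg
  · filter_upwards with r
    intro a _
    rw [norm_neg]
    exact norm_aux hc hlow (fun r' => abs_coe_mul_sin_le a r') r
  · have : Integrable (fun r : ℝ => (1 / c ^ 2) * (1 + r ^ 2)⁻¹) (volume.restrict (Set.Ioi 0)) :=
      (integrable_inv_one_add_sq.const_mul _).restrict
    simpa [div_eq_mul_inv] using this
  · filter_upwards with r
    intro a _
    have hcos : HasDerivAt (fun a : ℝ => Real.cos (r * a)) (-Real.sin (r * a) * r) a := by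
      have h1 : HasDerivAt (fun a : ℝ => r * a) r a := by
        simpa using (hasDerivAt_id a).const_mul r
      exact (Real.hasDerivAt_cos (r * a)).comp a h1
    have h2 : HasDerivAt (fun a : ℝ => ((Real.cos (r * a) : ℝ) : ℂ))
        ((-Real.sin (r * a) * r : ℝ) : ℂ) a := hcos.ofReal_comp
    have h3 := h2.const_mul ((1 : ℂ) / (((r : ℂ) ^ 2 + z) ^ 2))
    have h4 : (fun a : ℝ => ((Real.cos (r * a) : ℂ)) / (((r : ℂ) ^ 2 + z) ^ 2))
        =ᶠ[nhds a] fun a : ℝ =>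
          ((1 : ℂ) / (((r : ℂ) ^ 2 + z) ^ 2)) * ((Real.cos (r * a) : ℝ) : ℂ) :=
      Eventually.of_forall fun x => by ring
    refine (h3.congr_of_eventuallyEq h4).congr_deriv ?_
    push_cast
    ring

end Deriv

section Parts

variable (hs2 : s ^ 2 = z) (hsre : 0 < s.re)
include hs2 hsre

lemma J_eq (a : ℝ) (ha : 0 < a) : Jf z a = (2 / (a : ℂ)) * Kf z a := by
  obtain ⟨c, hc, hlow⟩ := abs_lower hs2 hsre
  have ha0 : (a : ℂ) ≠ 0 := by exact_mod_cast ha.ne'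
  set g : ℝ → ℂ := fun r => (Real.sin (r * a) : ℂ) / ((a : ℂ) * ((r : ℂ) ^ 2 + z)) with hgdef
  have hderiv : ∀ r ∈ Set.Ici (0 : ℝ), HasDerivAt g
      (((Real.cos (r * a) : ℂ)) / ((r : ℂ) ^ 2 + z)
        - (2 / (a : ℂ)) * (((r : ℂ) * (Real.sin (r * a) : ℂ)) / (((r : ℂ) ^ 2 + z) ^ 2))) r := by
    intro r _
    have hsin : HasDerivAt (fun r : ℝ => ((Real.sin (r * a) : ℝ) : ℂ))
        ((Real.cos (r * a) * a : ℝ) : ℂ) r := by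
      have h1 : HasDerivAt (fun r : ℝ => r * a) a r := by
        simpa using (hasDerivAt_id r).mul_const a
      exact ((Real.hasDerivAt_sin (r * a)).comp r h1).ofReal_comp
    have hden : HasDerivAt (fun r : ℝ => (a : ℂ) * ((r : ℂ) ^ 2 + z)) ((a : ℂ) * (2 * r)) r := by
      have hw : HasDerivAt (fun w : ℂ => (a : ℂ) * (w ^ 2 + z))
          ((a : ℂ) * (2 * (r : ℂ))) (r : ℂ) := by
        have := ((hasDerivAt_pow 2 ((r : ℂ))).add_const z).const_mul (a : ℂ)
        refine this.congr_deriv ?_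
        ring
      exact hw.comp_ofReal
    have hne : ((a : ℂ) * ((r : ℂ) ^ 2 + z)) ≠ 0 := mul_ne_zero ha0 (denom_ne hs2 hsre r)
    have hdiv := hsin.div hden hne
    refine hdiv.congr_deriv ?_
    have hd := denom_ne hs2 hsre r
    field_simp
    push_cast
    ring
  have htend : Tendsto g atTop (𝓝 0) := by
    have hb : Tendsto (fun r : ℝ => 1 / (a * c * (1 + r ^ 2))) atTop (𝓝 0) := by
      have h2 : Tendsto (fun r : ℝ => a * c * (1 + r ^ 2)) atTop atTop := by
        apply Tendsto.const_mul_atTop (by positivity)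
        exact tendsto_atTop_add_const_left _ 1 (tendsto_pow_atTop two_ne_zero)
      have := h2.inv_tendsto_atTop
      refine this.congr fun r => ?_
      simp [one_div]
    refine squeeze_zero_norm (fun r => ?_) hb
    · 
      have h1 : (0:ℝ) < 1 + r ^ 2 := by positivity
      have hdenpos : (0:ℝ) < a * c * (1 + r ^ 2) := by positivity
      have hdl : a * c * (1 + r ^ 2) ≤ ‖(a : ℂ) * ((r : ℂ) ^ 2 + z)‖ := by
        rw [norm_mul, cnorm_ofReal,
          abs_of_pos ha, mul_assoc]
        exact mul_le_mul_of_nonneg_left (hlow r) ha.le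
      have hnum : ‖((Real.sin (r * a) : ℝ) : ℂ)‖ ≤ 1 := by
        rw [cnorm_ofReal]
        exact Real.abs_sin_le_one _
      rw [hgdef]
      simp only [norm_div]
      exact div_le_div₀ (by norm_num) hnum hdenpos hdl
  have hint : IntegrableOn (fun r : ℝ =>
      ((Real.cos (r * a) : ℂ)) / ((r : ℂ) ^ 2 + z)
        - (2 / (a : ℂ)) * (((r : ℂ) * (Real.sin (r * a) : ℂ)) / (((r : ℂ) ^ 2 + z) ^ 2)))
      (Set.Ioi 0) := (intJ hs2 hsre a).sub ((intK hs2 hsre a).const_mul _)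
  have hftc := integral_Ioi_of_hasDerivAt_of_tendsto' hderiv hint htend
  have hg0 : g 0 = 0 := by simp [hgdef]
  rw [hg0, zero_sub, neg_zero] at hftc
  rw [integral_sub (intJ hs2 hsre a) ((intK hs2 hsre a).const_mul _),
    integral_const_mul] at hftc
  have : Jf z a - 2 / (a:ℂ) * Kf z a = 0 := hftc
  linear_combination this

lemma hasDerivAt_Kf' (a : ℝ) (ha : 0 < a) :
    HasDerivAt (Kf z) ((2 / (a : ℂ)) * Kf z a - z * Mf z a) a := by
  have h := hasDerivAt_Kf hs2 hsre a
  have hpt : (fun r : ℝ => ((r : ℂ) ^ 2 * (Real.cos (r * a) : ℂ)) / (((r : ℂ) ^ 2 + z) ^ 2))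
      = fun r : ℝ => ((Real.cos (r * a) : ℂ)) / ((r : ℂ) ^ 2 + z)
          - z * (((Real.cos (r * a) : ℂ)) / (((r : ℂ) ^ 2 + z) ^ 2)) := by
    funext r
    have hd := denom_ne hs2 hsre r
    field_simp
    ring
  rw [hpt] at h
  rw [integral_sub (intJ hs2 hsre a) ((intM hs2 hsre a).const_mul z),
    integral_const_mul] at h
  have hJ : Jf z a = (2 / (a : ℂ)) * Kf z a := J_eq hs2 hsre a ha
  have : (∫ r in Set.Ioi (0:ℝ), ((Real.cos (r * a) : ℂ)) / ((r : ℂ) ^ 2 + z)) = Jf z a := rfl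
  rw [this, hJ] at h
  exact h.congr_deriv (by rfl)

end Parts

section Mzero

variable (hs2 : s ^ 2 = z) (hsre : 0 < s.re)
include hs2 hsre

lemma M_zero : Mf z 0 = (π : ℂ) / (4 * z * s) := by
  have hz0 : z ≠ 0 := z_ne hs2 hsre
  have hs0 : s ≠ 0 := s_ne hsre
  obtain ⟨c, hcdef⟩ : ∃ w : ℂ, w = Complex.I * s := ⟨_, rfl⟩
  have hcim : 0 < c.im := by
    rw [hcdef]
    simpa [Complex.mul_im] using hsre
  have hc2 : c ^ 2 = -z := by
    rw [hcdef, mul_pow, Complex.I_sq, ← hs2]; ring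
  have hc0 : c ≠ 0 := fun h => by rw [h] at hcim; simp at hcim
  have hsub_ne : ∀ r : ℝ, ((r : ℂ) - c) ≠ 0 := by
    intro r h
    have := congrArg Complex.im h
    simp [Complex.sub_im] at this
    linarith
  have hadd_ne : ∀ r : ℝ, ((r : ℂ) + c) ≠ 0 := by
    intro r h
    have := congrArg Complex.im h
    simp [Complex.add_im] at this
    linarith
  have hsub_mem : ∀ r : ℝ, ((r : ℂ) - c) ∈ Complex.slitPlane := fun r =>
    Complex.mem_slitPlane_iff.mpr (Or.inr (by simp [Complex.sub_im]; linarith))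
  have hadd_mem : ∀ r : ℝ, ((r : ℂ) + c) ∈ Complex.slitPlane := fun r =>
    Complex.mem_slitPlane_iff.mpr (Or.inr (by simp [Complex.add_im]; linarith))
  set Fc : ℂ → ℂ := fun w => (-1 / (4 * z)) * (-(w - c)⁻¹ - (w + c)⁻¹)
      + (1 / (4 * z * c)) * (Complex.log (w - c) - Complex.log (w + c)) with hFcdef
  have hF : ∀ r : ℝ, HasDerivAt (fun x : ℝ => Fc x) ((((r : ℂ) ^ 2 + z) ^ 2)⁻¹) r := by
    intro r
    have h1 : HasDerivAt (fun w : ℂ => w - c) 1 (r : ℂ) := (hasDerivAt_id _).sub_const c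
    have h2 : HasDerivAt (fun w : ℂ => w + c) 1 (r : ℂ) := (hasDerivAt_id _).add_const c
    have hinv1 : HasDerivAt (fun w : ℂ => (w - c)⁻¹) (-1 / ((r : ℂ) - c) ^ 2) (r : ℂ) :=
      h1.inv (hsub_ne r)
    have hinv2 : HasDerivAt (fun w : ℂ => (w + c)⁻¹) (-1 / ((r : ℂ) + c) ^ 2) (r : ℂ) :=
      h2.inv (hadd_ne r)
    have hlog1 : HasDerivAt (fun w : ℂ => Complex.log (w - c)) (((r : ℂ) - c)⁻¹ * 1) (r : ℂ) :=
      (h1.clog (hsub_mem r)).congr_deriv (by rw [one_div, mul_one])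
    have hlog2 : HasDerivAt (fun w : ℂ => Complex.log (w + c)) (((r : ℂ) + c)⁻¹ * 1) (r : ℂ) :=
      (h2.clog (hadd_mem r)).congr_deriv (by rw [one_div, mul_one])
    have htot := ((hinv1.neg.sub hinv2).const_mul (-1 / (4 * z))).add
      ((hlog1.sub hlog2).const_mul (1 / (4 * z * c)))
    have := htot.comp_ofReal
    refine this.congr_deriv ?_
    have hd := denom_ne hs2 hsre r
    have eA : -(-1 / ((r : ℂ) - c) ^ 2) - -1 / ((r : ℂ) + c) ^ 2
        = (2 * (r : ℂ) ^ 2 + 2 * c ^ 2) / (((r : ℂ) - c) ^ 2 * ((r : ℂ) + c) ^ 2) := by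
      field_simp [hsub_ne r, hadd_ne r]
      ring
    have eB : ((r : ℂ) - c)⁻¹ * 1 - ((r : ℂ) + c)⁻¹ * 1
        = (2 * c) / (((r : ℂ) - c) * ((r : ℂ) + c)) := by
      field_simp [hsub_ne r, hadd_ne r]
      ring
    rw [eA, eB]
    have hfact : ((r : ℂ) - c) * ((r : ℂ) + c) = (r : ℂ) ^ 2 + z := by
      linear_combination -hc2
    have hsq : ((r : ℂ) - c) ^ 2 * ((r : ℂ) + c) ^ 2 = ((r : ℂ) ^ 2 + z) ^ 2 := by
      rw [← mul_pow, hfact]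
    rw [hsq, hfact, hc2]
    have e3 : 2 * (r:ℂ) ^ 2 + 2 * -z = 2 * ((r:ℂ) ^ 2 + z) - 4 * z := by ring
    rw [e3]
    obtain ⟨w, hw⟩ : ∃ w : ℂ, ((r:ℂ) ^ 2 + z) = w := ⟨_, rfl⟩
    rw [hw] at hd ⊢
    have hA : (4 * z) * w ^ 2 ≠ 0 := by
      exact mul_ne_zero (by simpa using hz0) (pow_ne_zero 2 hd)
    have hB : (4 * z * c) * w ≠ 0 := by
      exact mul_ne_zero (mul_ne_zero (by simpa using hz0) hc0) hd
    rw [inv_eq_one_div, div_mul_div_comm, div_mul_div_comm,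
      div_add_div _ _ hA hB, div_eq_div_iff (mul_ne_zero hA hB) (pow_ne_zero 2 hd)]
    ring
  have hT1 : ∀ c' : ℂ, c'.im ≠ 0 → Tendsto (fun r : ℝ => ((r : ℂ) - c')⁻¹) atTop (𝓝 0) := by
    intro c' _
    have hn : Tendsto (fun r : ℝ => ‖(r : ℂ) - c'‖) atTop atTop := by
      apply tendsto_atTop_mono (fun r : ℝ => ?_)
        (tendsto_atTop_add_const_right _ (-‖c'‖) tendsto_id)
      have := norm_sub_norm_le ((r : ℂ)) c'
      have habs : ‖((r : ℂ))‖ = |r| := by simp [cnorm_ofReal]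
      rw [habs] at this
      have : r - ‖c'‖ ≤ ‖(r:ℂ) - c'‖ := le_trans (by have := le_abs_self r; linarith) this
      simpa using this
    refine squeeze_zero_norm (fun r => ?_) (tendsto_inv_atTop_zero.comp hn)
    simp [Function.comp, norm_inv]
  have hT2 : Tendsto (fun r : ℝ =>
      Complex.log ((r : ℂ) - c) - Complex.log ((r : ℂ) + c)) atTop (𝓝 0) := by
    have hrinv : Tendsto (fun r : ℝ => ((r : ℂ))⁻¹) atTop (𝓝 0) := by
      have hn : Tendsto (fun r : ℝ => ‖((r : ℂ))‖) atTop atTop := by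
        refine tendsto_atTop_mono (fun r : ℝ => ?_) tendsto_id
        simp [cnorm_ofReal]
        exact le_abs_self r
      refine squeeze_zero_norm (fun r => ?_) (tendsto_inv_atTop_zero.comp hn)
      simp [Function.comp, norm_inv]
    have hcr : Tendsto (fun r : ℝ => c / ((r : ℂ))) atTop (𝓝 0) := by
      have := hrinv.const_mul c
      simpa [div_eq_mul_inv] using this
    have hmem1 : (1 : ℂ) ∈ Complex.slitPlane := Complex.mem_slitPlane_iff.mpr (Or.inl (by simp))
    have h1m : Tendsto (fun r : ℝ => (1 : ℂ) - c / ((r : ℂ))) atTop (𝓝 1) := by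
      simpa using tendsto_const_nhds.sub hcr
    have h1p : Tendsto (fun r : ℝ => (1 : ℂ) + c / ((r : ℂ))) atTop (𝓝 1) := by
      simpa using tendsto_const_nhds.add hcr
    have hl1 : Tendsto (fun r : ℝ => Complex.log ((1 : ℂ) - c / ((r : ℂ)))) atTop (𝓝 0) := by
      have := ((continuousAt_clog hmem1).tendsto.comp h1m)
      rwa [Complex.log_one] at this
    have hl2 : Tendsto (fun r : ℝ => Complex.log ((1 : ℂ) + c / ((r : ℂ)))) atTop (𝓝 0) := by
      have := ((continuousAt_clog hmem1).tendsto.comp h1p)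
      rwa [Complex.log_one] at this
    have hsub := hl1.sub hl2
    rw [sub_zero] at hsub
    refine Tendsto.congr' ?_ hsub
    filter_upwards [eventually_gt_atTop (0:ℝ)] with r hr
    have hr0 : ((r : ℂ)) ≠ 0 := by exact_mod_cast hr.ne'
    have hm : ((1 : ℂ) - c / ((r : ℂ))) ≠ 0 := by
      intro h
      have := congrArg Complex.im h
      simp [Complex.sub_im, Complex.div_im, Complex.ofReal_re, Complex.ofReal_im] at this
      rcases this with h' | h'
      · have : c.im ≠ 0 := ne_of_gt hcim
        exact this h'
      · exact hr.ne' (by nlinarith [h'])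
    have hp : ((1 : ℂ) + c / ((r : ℂ))) ≠ 0 := by
      intro h
      have := congrArg Complex.im h
      simp [Complex.add_im, Complex.div_im, Complex.ofReal_re, Complex.ofReal_im] at this
      rcases this with h' | h'
      · exact (ne_of_gt hcim) h'
      · exact hr.ne' (by nlinarith [h'])
    have e1 : ((r : ℂ)) - c = (r : ℂ) * ((1:ℂ) - c / ((r : ℂ))) := by field_simp
    have e2 : ((r : ℂ)) + c = (r : ℂ) * ((1:ℂ) + c / ((r : ℂ))) := by field_simp
    rw [e1, e2, Complex.log_ofReal_mul hr hm, Complex.log_ofReal_mul hr hp]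
    ring
  have hTend : Tendsto (fun r : ℝ => Fc r) atTop (𝓝 0) := by
    have hTa := hT1 c (ne_of_gt hcim)
    have hTb : Tendsto (fun r : ℝ => ((r : ℂ) + c)⁻¹) atTop (𝓝 0) := by
      have := hT1 (-c) (by simp; exact ne_of_gt hcim)
      refine this.congr fun r => ?_
      rw [sub_neg_eq_add]
    have hcomb := ((hTa.neg.sub hTb).const_mul (-1 / (4 * z))).add
      (hT2.const_mul (1 / (4 * z * c)))
    have h0 : -1 / (4 * z) * (-(0:ℂ) - 0) + 1 / (4 * z * c) * 0 = 0 := by ring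
    rw [h0] at hcomb
    exact hcomb
  have hftc := integral_Ioi_of_hasDerivAt_of_tendsto' (f := fun x : ℝ => Fc x)
    (fun r _ => hF r) (intInv hs2 hsre) hTend
  have hM : Mf z 0 = ∫ r in Set.Ioi (0:ℝ), (((r : ℂ) ^ 2 + z) ^ 2)⁻¹ := by
    unfold Mf
    simp only [mul_zero, Real.cos_zero, Complex.ofReal_one, one_div]
  have hlogneg : Complex.log (-c) - Complex.log c = -(π : ℂ) * Complex.I := by
    apply Complex.ext
    · simp [Complex.sub_re, Complex.log_re, map_neg, Complex.neg_re, Complex.mul_re,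
        Complex.I_re, Complex.I_im, Complex.ofReal_re, Complex.ofReal_im]
    · simp [Complex.sub_im, Complex.log_im, Complex.arg_neg_eq_arg_sub_pi_of_im_pos hcim,
        Complex.neg_im, Complex.mul_im, Complex.I_re, Complex.I_im, Complex.ofReal_re,
        Complex.ofReal_im]
  have hF0 : Fc 0 = -(π : ℂ) / (4 * z * s) := by
    rw [hFcdef]
    simp only [zero_sub, zero_add, inv_neg, neg_neg, hlogneg]
    rw [hcdef]
    have hI : Complex.I ≠ 0 := Complex.I_ne_zero
    field_simp
    ring_nf
  have hbeta : (fun x : ℝ => Fc ↑x) 0 = Fc 0 := by norm_num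
  rw [hM, hftc, Complex.ofReal_zero, hF0]
  ring

end Mzero

section Bounds

lemma const_on_Ioi {f : ℝ → ℂ} (h : ∀ x ∈ Set.Ioi (0:ℝ), HasDerivAt f 0 x)
    {x y : ℝ} (hx : 0 < x) (hy : 0 < y) : f x = f y := by
  have key : ∀ x y : ℝ, 0 < x → 0 < y → x ≤ y → f y = f x := by
    intro x y hx hy hxy
    have hsub : Set.Icc x y ⊆ Set.Ioi 0 := fun t ht => lt_of_lt_of_le hx ht.1
    have hcont : ContinuousOn f (Set.Icc x y) := fun t ht =>
      ((h t (hsub ht)).continuousAt).continuousWithinAt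
    have := constant_of_has_deriv_right_zero hcont (fun t ht =>
      ((h t (hsub (Set.Ico_subset_Icc_self ht))).hasDerivWithinAt))
    exact this y (Set.right_mem_Icc.mpr hxy)
  rcases le_total x y with hxy | hxy
  · exact (key x y hx hy hxy).symm
  · exact key y x hy hx hxy

lemma texp_le (b : ℝ) (hb : 0 < b) (t : ℝ) (ht : 0 ≤ t) :
    t * Real.exp (-b * t) ≤ 1 / b := by
  have h2 : t * b ≤ Real.exp (b * t) := by nlinarith [Real.add_one_le_exp (b * t)]
  have hE := Real.exp_pos (b * t)
  rw [le_div_iff₀ hb, show -b * t = -(b * t) by ring, Real.exp_neg]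
  have : t * (Real.exp (b * t))⁻¹ * b = (t * b) / Real.exp (b * t) := by ring
  rw [this, div_le_one hE]
  exact h2

lemma exp_le_one' (b : ℝ) (hb : 0 < b) (t : ℝ) (ht : 0 ≤ t) : Real.exp (-b * t) ≤ 1 := by
  rw [Real.exp_le_one_iff]
  nlinarith

variable (hs2 : s ^ 2 = z) (hsre : 0 < s.re)
include hs2 hsre

lemma KM_bound : ∃ B : ℝ, (∀ a : ℝ, ‖Kf z a‖ ≤ B) ∧ (∀ a : ℝ, ‖Mf z a‖ ≤ B) := by
  obtain ⟨c, hc, hlow⟩ := abs_lower hs2 hsre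
  have hbint : Integrable (fun r : ℝ => (1 / c ^ 2) / (1 + r ^ 2))
      (volume.restrict (Set.Ioi 0)) := by
    have : Integrable (fun r : ℝ => (1 / c ^ 2) * (1 + r ^ 2)⁻¹) (volume.restrict (Set.Ioi 0)) :=
      (integrable_inv_one_add_sq.const_mul _).restrict
    simpa [div_eq_mul_inv] using this
  refine ⟨∫ r in Set.Ioi (0:ℝ), (1 / c ^ 2) / (1 + r ^ 2), fun a => ?_, fun a => ?_⟩
  · exact norm_integral_le_of_norm_le hbint (Eventually.of_forall fun r =>
      norm_aux hc hlow (abs_coe_mul_sin_le a) r)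
  · exact norm_integral_le_of_norm_le hbint (Eventually.of_forall fun r =>
      norm_aux hc hlow (abs_cos_le' a) r)

end Bounds

section Main

variable (hs2 : s ^ 2 = z) (hsre : 0 < s.re)
include hs2 hsre

lemma K_eq (a : ℝ) (ha : 0 < a) :
    Kf z a = ((π : ℂ) / (4 * s)) * (a : ℂ) * Complex.exp (-s * (a : ℂ)) := by
  have hz0 : z ≠ 0 := z_ne hs2 hsre
  have hs0 : s ≠ 0 := s_ne hsre
  have hπ : ((π : ℝ) : ℂ) ≠ 0 := by
    exact_mod_cast Real.pi_ne_zero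
  obtain ⟨A, hAdef⟩ : ∃ A : ℂ, A = (π : ℂ) / (4 * z * s) := ⟨_, rfl⟩
  have hAz : A * z = (π : ℂ) / (4 * s) := by rw [hAdef]; field_simp
  -- the exponential and its derivative
  obtain ⟨E, hEdef⟩ : ∃ E : ℝ → ℂ, E = fun t : ℝ => Complex.exp (-s * (t : ℂ)) := ⟨_, rfl⟩
  have hcoe : ∀ t : ℝ, HasDerivAt (fun t : ℝ => ((t : ℝ) : ℂ)) 1 t := fun t =>
    (hasDerivAt_id ((t : ℂ))).comp_ofReal
  have hE : ∀ t : ℝ, HasDerivAt E (-s * E t) t := by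
    intro t
    have hinner : HasDerivAt (fun w : ℂ => -s * w) (-s * 1) ((t : ℂ)) :=
      (hasDerivAt_id ((t : ℂ))).const_mul (-s)
    have h := ((Complex.hasDerivAt_exp (-s * (t : ℂ))).comp ((t : ℂ)) hinner).comp_ofReal
    rw [hEdef]
    exact h.congr_deriv (by ring)
  have hEnorm : ∀ t : ℝ, ‖E t‖ = Real.exp (-s.re * t) := by
    intro t
    rw [hEdef]
    rw [Complex.norm_exp]
    congr 1
    simp [Complex.mul_re]
  have hE0 : ∀ t : ℝ, E t ≠ 0 := fun t => by rw [hEdef]; exact Complex.exp_ne_zero _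
  -- y1 and its derivative
  have hlin : ∀ t : ℝ, HasDerivAt (fun t : ℝ => (1 : ℂ) + s * (t : ℂ)) s t := by
    intro t
    have := ((hcoe t).const_mul s).const_add 1
    exact this.congr_deriv (by ring)
  have hy1 : ∀ t : ℝ, HasDerivAt (fun t : ℝ => E t * (1 + s * (t : ℂ)))
      (-z * (t : ℂ) * E t) t := by
    intro t
    have := (hE t).mul (hlin t)
    refine this.congr_deriv ?_
    linear_combination (-(E t) * (t : ℂ)) * hs2
  have h1s : ∀ t : ℝ, 0 ≤ t → (1 + s * (t : ℂ)) ≠ 0 := by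
    intro t ht h
    have := congrArg Complex.re h
    simp [Complex.add_re, Complex.mul_re] at this
    nlinarith
  have hy1ne : ∀ t : ℝ, 0 ≤ t → E t * (1 + s * (t : ℂ)) ≠ 0 := fun t ht =>
    mul_ne_zero (hE0 t) (h1s t ht)
  -- u and v
  obtain ⟨u, hudef⟩ : ∃ u : ℝ → ℂ, u = fun t : ℝ => Kf z t - A * z * (t : ℂ) * E t := ⟨_, rfl⟩
  obtain ⟨v, hvdef⟩ : ∃ v : ℝ → ℂ, v = fun t : ℝ => Mf z t - A * (E t * (1 + s * (t : ℂ))) :=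
    ⟨_, rfl⟩
  have hu : ∀ t : ℝ, 0 < t → HasDerivAt u (2 / (t : ℂ) * u t - z * v t) t := by
    intro t ht
    have ht0 : ((t : ℝ) : ℂ) ≠ 0 := by exact_mod_cast ht.ne'
    have hk : HasDerivAt (fun t : ℝ => A * z * (t : ℂ) * E t)
        (A * z * E t + A * z * (t : ℂ) * (-s * E t)) t := by
      have h1 : HasDerivAt (fun t : ℝ => A * z * (t : ℂ)) (A * z * 1) t := (hcoe t).const_mul _
      exact (h1.mul (hE t)).congr_deriv (by ring)
    have := (hasDerivAt_Kf' hs2 hsre t ht).sub hk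
    rw [hudef, hvdef]
    refine this.congr_deriv ?_
    field_simp
    ring
  have hv : ∀ t : ℝ, HasDerivAt v (-(u t)) t := by
    intro t
    have := (hasDerivAt_Mf hs2 hsre t).sub ((hy1 t).const_mul A)
    rw [hudef, hvdef]
    refine this.congr_deriv ?_
    ring
  -- the Wronskian-type function ω
  obtain ⟨W, hWdef⟩ : ∃ W : ℝ → ℂ, W = fun t : ℝ =>
      -z * (t : ℂ) * E t * v t + u t * (E t * (1 + s * (t : ℂ))) := ⟨_, rfl⟩
  have hW : ∀ t : ℝ, 0 < t → HasDerivAt W (2 / (t : ℂ) * W t) t := by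
    intro t ht
    have ht0 : ((t : ℝ) : ℂ) ≠ 0 := by exact_mod_cast ht.ne'
    have hf1 : HasDerivAt (fun t : ℝ => -z * (t : ℂ) * E t)
        (-z * E t + -z * (t : ℂ) * (-s * E t)) t := by
      have h1 : HasDerivAt (fun t : ℝ => -z * (t : ℂ)) (-z * 1) t := (hcoe t).const_mul _
      exact (h1.mul (hE t)).congr_deriv (by ring)
    have hT1 := hf1.mul (hv t)
    have hT2 := (hu t ht).mul (hy1 t)
    have := hT1.add hT2
    rw [hWdef]
    refine this.congr_deriv ?_
    field_simp
    ring
  -- W t = W 1 * t^2 on (0, ∞)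
  have hWconst : ∀ t : ℝ, 0 < t → W t = W 1 * (t : ℂ) ^ 2 := by
    have hφ : ∀ t ∈ Set.Ioi (0 : ℝ), HasDerivAt (fun t : ℝ => W t / ((t : ℂ)) ^ 2) 0 t := by
      intro t ht
      have ht' : (0:ℝ) < t := ht
      have ht0 : ((t : ℝ) : ℂ) ≠ 0 := by exact_mod_cast ht'.ne'
      have hden : HasDerivAt (fun t : ℝ => ((t : ℂ)) ^ 2) (2 * (t : ℂ)) t := by
        have := (hasDerivAt_pow 2 ((t : ℂ))).comp_ofReal
        exact this.congr_deriv (by ring)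
      have := (hW t ht').div hden (pow_ne_zero 2 ht0)
      refine this.congr_deriv ?_
      rw [div_eq_zero_iff]
      left
      field_simp
      ring
    intro t ht
    have h1 := const_on_Ioi hφ ht one_pos
    have ht0 : ((t : ℝ) : ℂ) ≠ 0 := by exact_mod_cast ht.ne'
    field_simp at h1
    rw [Complex.ofReal_one, one_pow, mul_one] at h1
    rw [h1]
    ring
  -- bounds on u and v
  obtain ⟨B, hBK, hBM⟩ := KM_bound hs2 hsre
  have hnt : ∀ t : ℝ, 0 ≤ t → ‖((t : ℝ) : ℂ)‖ = t := by
    intro t ht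
    rw [cnorm_ofReal, abs_of_nonneg ht]
  have h1st : ∀ t : ℝ, 0 ≤ t → ‖(1 : ℂ) + s * (t : ℂ)‖ ≤ 1 + ‖s‖ * t := by
    intro t ht
    calc ‖(1 : ℂ) + s * (t : ℂ)‖ ≤ ‖(1 : ℂ)‖ + ‖s * (t : ℂ)‖ := norm_add_le _ _
    _ = 1 + ‖s‖ * t := by rw [norm_one, norm_mul, hnt t ht]
  have hy1b : ∀ t : ℝ, 0 ≤ t → ‖E t * (1 + s * (t : ℂ))‖ ≤ 1 + ‖s‖ / s.re := by
    intro t ht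
    rw [norm_mul, hEnorm]
    calc Real.exp (-s.re * t) * ‖(1 : ℂ) + s * (t : ℂ)‖
        ≤ Real.exp (-s.re * t) * (1 + ‖s‖ * t) :=
          mul_le_mul_of_nonneg_left (h1st t ht) (Real.exp_pos _).le
    _ = Real.exp (-s.re * t) + ‖s‖ * (t * Real.exp (-s.re * t)) := by ring
    _ ≤ 1 + ‖s‖ * (1 / s.re) :=
          add_le_add (exp_le_one' s.re hsre t ht)
            (mul_le_mul_of_nonneg_left (texp_le s.re hsre t ht) (norm_nonneg s))
    _ = 1 + ‖s‖ / s.re := by ring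
  have hvb : ∀ t : ℝ, 0 ≤ t → ‖v t‖ ≤ B + ‖A‖ * (1 + ‖s‖ / s.re) := by
    intro t ht
    rw [hvdef]
    calc ‖Mf z t - A * (E t * (1 + s * (t : ℂ)))‖
        ≤ ‖Mf z t‖ + ‖A * (E t * (1 + s * (t : ℂ)))‖ := norm_sub_le _ _
    _ ≤ B + ‖A‖ * (1 + ‖s‖ / s.re) := add_le_add (hBM t) (by
          rw [norm_mul]
          exact mul_le_mul_of_nonneg_left (hy1b t ht) (norm_nonneg A))
  have hub : ∀ t : ℝ, 0 ≤ t → ‖u t‖ ≤ B + ‖A * z‖ / s.re := by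
    intro t ht
    rw [hudef]
    calc ‖Kf z t - A * z * (t : ℂ) * E t‖
        ≤ ‖Kf z t‖ + ‖A * z * (t : ℂ) * E t‖ := norm_sub_le _ _
    _ ≤ B + ‖A * z‖ / s.re := by
          refine add_le_add (hBK t) ?_
          have e1 : ‖A * z * (t : ℂ) * E t‖ = ‖A * z‖ * (t * Real.exp (-s.re * t)) := by
            rw [norm_mul, norm_mul, hnt t ht, hEnorm]
            ring
          rw [e1]
          calc ‖A * z‖ * (t * Real.exp (-s.re * t)) ≤ ‖A * z‖ * (1 / s.re) :=
                mul_le_mul_of_nonneg_left (texp_le s.re hsre t ht) (norm_nonneg _)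
          _ = ‖A * z‖ / s.re := by ring
  -- decay of the exponential terms
  have hexp0 : Tendsto (fun t : ℝ => Real.exp (-s.re * t)) atTop (𝓝 0) := by
    apply Real.tendsto_exp_atBot.comp
    have h1 : Tendsto (fun t : ℝ => s.re * t) atTop atTop :=
      Tendsto.const_mul_atTop hsre tendsto_id
    have h2 := tendsto_neg_atTop_atBot.comp h1
    refine h2.congr fun t => ?_
    simp [Function.comp]
  have hte0 : Tendsto (fun t : ℝ => t * Real.exp (-s.re * t)) atTop (𝓝 0) := by
    have := tendsto_rpow_mul_exp_neg_mul_atTop_nhds_zero 1 s.re hsre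
    refine this.congr fun t => ?_
    rw [Real.rpow_one]
  -- W tends to 0 at infinity
  have hWlim : Tendsto W atTop (𝓝 0) := by
    obtain ⟨Bv, hBv⟩ : ∃ Bv, Bv = B + ‖A‖ * (1 + ‖s‖ / s.re) := ⟨_, rfl⟩
    obtain ⟨Bu, hBu⟩ : ∃ Bu, Bu = B + ‖A * z‖ / s.re := ⟨_, rfl⟩
    have hvb' : ∀ t : ℝ, 0 ≤ t → ‖v t‖ ≤ Bv := fun t ht => hBv ▸ hvb t ht
    have hub' : ∀ t : ℝ, 0 ≤ t → ‖u t‖ ≤ Bu := fun t ht => hBu ▸ hub t ht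
    have hBv0 : 0 ≤ Bv := le_trans (norm_nonneg (v 0)) (hvb' 0 le_rfl)
    have hBu0 : 0 ≤ Bu := le_trans (norm_nonneg (u 0)) (hub' 0 le_rfl)
    have hg : Tendsto (fun t : ℝ => (‖z‖ * Bv + Bu * ‖s‖) * (t * Real.exp (-s.re * t))
        + Bu * Real.exp (-s.re * t)) atTop (𝓝 0) := by
      have := (hte0.const_mul (‖z‖ * Bv + Bu * ‖s‖)).add (hexp0.const_mul Bu)
      simpa using this
    refine squeeze_zero_norm' ?_ hg
    filter_upwards [eventually_ge_atTop (0:ℝ)] with t ht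
    rw [hWdef]
    have hb1 : ‖-z * (t : ℂ) * E t * v t‖ ≤ ‖z‖ * Bv * (t * Real.exp (-s.re * t)) := by
      have e1 : ‖-z * (t : ℂ) * E t * v t‖
          = ‖z‖ * t * Real.exp (-s.re * t) * ‖v t‖ := by
        rw [norm_mul, norm_mul, norm_mul, norm_neg, hnt t ht, hEnorm]
      rw [e1]
      calc ‖z‖ * t * Real.exp (-s.re * t) * ‖v t‖
          ≤ ‖z‖ * t * Real.exp (-s.re * t) * Bv := by
            refine mul_le_mul_of_nonneg_left (hvb' t ht) ?_
            exact mul_nonneg (mul_nonneg (norm_nonneg z) ht) (Real.exp_pos _).le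
      _ = ‖z‖ * Bv * (t * Real.exp (-s.re * t)) := by ring
    have hb2 : ‖u t * (E t * (1 + s * (t : ℂ)))‖
        ≤ Bu * (Real.exp (-s.re * t) + ‖s‖ * (t * Real.exp (-s.re * t))) := by
      have e2 : ‖u t * (E t * (1 + s * (t : ℂ)))‖
          = ‖u t‖ * (Real.exp (-s.re * t) * ‖(1 : ℂ) + s * (t : ℂ)‖) := by
        rw [norm_mul, norm_mul, hEnorm]
      rw [e2]
      calc ‖u t‖ * (Real.exp (-s.re * t) * ‖(1 : ℂ) + s * (t : ℂ)‖)
          ≤ Bu * (Real.exp (-s.re * t) * (1 + ‖s‖ * t)) := by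
            refine mul_le_mul (hub' t ht)
              (mul_le_mul_of_nonneg_left (h1st t ht) (Real.exp_pos _).le)
              (mul_nonneg (Real.exp_pos _).le (norm_nonneg _)) hBu0
      _ = Bu * (Real.exp (-s.re * t) + ‖s‖ * (t * Real.exp (-s.re * t))) := by ring
    calc ‖-z * (t : ℂ) * E t * v t + u t * (E t * (1 + s * (t : ℂ)))‖
        ≤ ‖-z * (t : ℂ) * E t * v t‖ + ‖u t * (E t * (1 + s * (t : ℂ)))‖ := norm_add_le _ _
    _ ≤ ‖z‖ * Bv * (t * Real.exp (-s.re * t))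
        + Bu * (Real.exp (-s.re * t) + ‖s‖ * (t * Real.exp (-s.re * t))) := add_le_add hb1 hb2
    _ = (‖z‖ * Bv + Bu * ‖s‖) * (t * Real.exp (-s.re * t)) + Bu * Real.exp (-s.re * t) := by
        ring
  -- W 1 = 0, hence W vanishes on (0,∞)
  have hW1 : W 1 = 0 := by
    by_contra hne
    have hev : ∀ᶠ t in atTop, W t = W 1 * (t : ℂ) ^ 2 := by
      filter_upwards [eventually_gt_atTop (0:ℝ)] with t ht
      exact hWconst t ht
    have h2 : Tendsto (fun t : ℝ => W 1 * (t : ℂ) ^ 2) atTop (𝓝 0) :=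
      hWlim.congr' hev
    have h3 := h2.norm
    rw [norm_zero] at h3
    have h4 : Tendsto (fun t : ℝ => ‖W 1 * (t : ℂ) ^ 2‖) atTop atTop := by
      have h5 : Tendsto (fun t : ℝ => ‖W 1‖ * t ^ 2) atTop atTop :=
        Tendsto.const_mul_atTop (norm_pos_iff.mpr hne) (tendsto_pow_atTop two_ne_zero)
      refine h5.congr' ?_
      filter_upwards [eventually_ge_atTop (0:ℝ)] with t ht
      rw [norm_mul, norm_pow, hnt t ht]
    exact not_tendsto_atTop_of_tendsto_nhds h3 h4
  have hWzero : ∀ t : ℝ, 0 < t → W t = 0 := fun t ht => by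
    rw [hWconst t ht, hW1, zero_mul]
  -- continuity of Mf at 0 from the right, and v → 0
  have hMcont : Tendsto (fun t : ℝ => Mf z t) (𝓝[>] (0:ℝ)) (𝓝 (Mf z 0)) := by
    obtain ⟨c, hc, hlow⟩ := abs_lower hs2 hsre
    have hbint : Integrable (fun r : ℝ => (1 / c ^ 2) / (1 + r ^ 2))
        (volume.restrict (Set.Ioi 0)) := by
      have : Integrable (fun r : ℝ => (1 / c ^ 2) * (1 + r ^ 2)⁻¹)
          (volume.restrict (Set.Ioi 0)) := (integrable_inv_one_add_sq.const_mul _).restrict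
      simpa [div_eq_mul_inv] using this
    apply tendsto_integral_filter_of_dominated_convergence _ ?_ ?_ hbint ?_
    · exact Eventually.of_forall fun t =>
        ((cont_div_pow (denom_ne hs2 hsre) (by fun_prop) 2).aestronglyMeasurable)
    · exact Eventually.of_forall fun t =>
        (Eventually.of_forall fun r => norm_aux hc hlow (abs_cos_le' t) r)
    · filter_upwards with r
      have hcont : Continuous (fun t : ℝ => ((Real.cos (r * t) : ℂ)) / (((r : ℂ) ^ 2 + z) ^ 2)) := by
        fun_prop
      exact (hcont.tendsto 0).mono_left (nhdsWithin_le_nhds : 𝓝[>] (0:ℝ) ≤ nhds 0)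
  have hy1cont : Tendsto (fun t : ℝ => E t * (1 + s * (t : ℂ))) (𝓝[>] (0:ℝ)) (𝓝 1) := by
    have hcont : Continuous (fun t : ℝ => E t * (1 + s * (t : ℂ))) := by
      rw [hEdef]; fun_prop
    have h0 : E 0 * (1 + s * ((0:ℝ) : ℂ)) = 1 := by rw [hEdef]; simp
    have := (hcont.tendsto 0).mono_left (nhdsWithin_le_nhds : 𝓝[>] (0:ℝ) ≤ nhds 0)
    rwa [h0] at this
  have hA0 : Mf z 0 = A := by rw [M_zero hs2 hsre, hAdef]
  have hv0 : Tendsto v (𝓝[>] (0:ℝ)) (𝓝 0) := by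
    rw [hvdef]
    have := hMcont.sub (hy1cont.const_mul A)
    simpa [hA0] using this
  -- the quotient v / y1 is constant on (0,∞) with limit 0 at 0⁺
  have hψ : ∀ t ∈ Set.Ioi (0:ℝ), HasDerivAt (fun t : ℝ => v t / (E t * (1 + s * (t : ℂ)))) 0 t := by
    intro t ht
    have ht' : (0:ℝ) < t := ht
    have := (hv t).div (hy1 t) (hy1ne t ht'.le)
    refine this.congr_deriv ?_
    rw [div_eq_zero_iff]
    left
    have hwt := hWzero t ht'
    rw [hWdef] at hwt
    linear_combination -hwt
  have hvzero : ∀ t : ℝ, 0 < t → v t = 0 := by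
    intro t ht
    have hev : (fun x : ℝ => v x / (E x * (1 + s * (x : ℂ))))
        =ᶠ[𝓝[>] (0:ℝ)] (fun _ => v t / (E t * (1 + s * (t : ℂ)))) := by
      filter_upwards [self_mem_nhdsWithin] with x hx
      exact const_on_Ioi hψ hx ht
    have hlim : Tendsto (fun x : ℝ => v x / (E x * (1 + s * (x : ℂ)))) (𝓝[>] (0:ℝ))
        (𝓝 (v t / (E t * (1 + s * (t : ℂ))))) :=
      Tendsto.congr' hev.symm tendsto_const_nhds
    have hlim2 : Tendsto (fun x : ℝ => v x / (E x * (1 + s * (x : ℂ)))) (𝓝[>] (0:ℝ))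
        (𝓝 (0 / 1)) := hv0.div hy1cont one_ne_zero
    have heq := tendsto_nhds_unique hlim hlim2
    rw [zero_div] at heq
    rw [div_eq_zero_iff] at heq
    rcases heq with h | h
    · exact h
    · exact absurd h (hy1ne t ht.le)
  -- conclude u a = 0
  have hveq : v =ᶠ[nhds a] fun _ => (0:ℂ) := by
    filter_upwards [Ioi_mem_nhds ha] with x hx
    exact hvzero x hx
  have hvd : HasDerivAt v 0 a := (hasDerivAt_const a (0:ℂ)).congr_of_eventuallyEq hveq
  have huz : u a = 0 := neg_eq_zero.mp ((hv a).unique hvd)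
  rw [hudef] at huz
  have hKa : Kf z a = A * z * (a : ℂ) * E a := by linear_combination huz
  rw [hKa, hEdef]
  rw [hAz]

end Main

end Stmt14

/-- For `z` off the negative real axis, with the principal branch
square root (`Re √z > 0`) and `a > 0`:
`(1/(2π²a)) ∫₀^∞ r sin(ra)/(r²+z)² dr = e^{−√z a}/(8π√z)`.
In particular `d/dz (−e^{−√z a}/(4πa)) = e^{−√z a}/(8π√z)`. -/
theorem stmt14 (z : ℂ) (hz : z ∈ Complex.slitPlane) (hre : 0 < (z ^ (1/2 : ℂ)).re)
    (a : ℝ) (ha : 0 < a) :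
    (1 / (2 * (π : ℂ) ^ 2 * (a : ℂ))) *
        (∫ r in Set.Ioi (0 : ℝ),
          ((r : ℂ) * (Real.sin (r * a) : ℂ)) / (((r : ℂ) ^ 2 + z) ^ 2))
      = Complex.exp (-(z ^ (1/2 : ℂ)) * (a : ℂ)) / (8 * (π : ℂ) * z ^ (1/2 : ℂ))
    ∧
    HasDerivAt (fun w : ℂ => -Complex.exp (-(w ^ (1/2 : ℂ)) * (a : ℂ)) / (4 * (π : ℂ) * (a : ℂ)))
      (Complex.exp (-(z ^ (1/2 : ℂ)) * (a : ℂ)) / (8 * (π : ℂ) * z ^ (1/2 : ℂ))) z := by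
  have hz0 : z ≠ 0 := by
    intro h
    rw [h, Complex.zero_cpow (by norm_num : (1/2 : ℂ) ≠ 0)] at hre
    simp at hre
  have hs2 : (z ^ (1/2 : ℂ)) ^ 2 = z := by
    rw [sq, ← Complex.cpow_add _ _ hz0]
    norm_num
  have hsre : 0 < (z ^ (1/2 : ℂ)).re := hre
  have hs0 : z ^ (1/2 : ℂ) ≠ 0 := Stmt14.s_ne hsre
  have hπ : ((π : ℝ) : ℂ) ≠ 0 := by exact_mod_cast Real.pi_ne_zero
  have ha0 : ((a : ℝ) : ℂ) ≠ 0 := by exact_mod_cast ha.ne'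
  constructor
  · have hK := Stmt14.K_eq hs2 hsre a ha
    have hint : (∫ r in Set.Ioi (0 : ℝ),
        ((r : ℂ) * (Real.sin (r * a) : ℂ)) / (((r : ℂ) ^ 2 + z) ^ 2)) = Stmt14.Kf z a := rfl
    rw [hint, hK]
    field_simp
    norm_num
  · have h1 : HasDerivAt (fun w : ℂ => w ^ (1/2 : ℂ)) ((1/2 : ℂ) * z ^ ((1/2 : ℂ) - 1)) z :=
      (Complex.hasStrictDerivAt_cpow_const hz).hasDerivAt
    have h2 := (h1.neg.mul_const ((a : ℂ)))
    have h3 := h2.cexp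
    have h4 := h3.neg.div_const (4 * (π : ℂ) * (a : ℂ))
    refine h4.congr_deriv ?_
    have hpow : z ^ ((1/2 : ℂ) - 1) = (z ^ (1/2 : ℂ))⁻¹ := by
      rw [show (1/2 : ℂ) - 1 = -(1/2 : ℂ) by norm_num, Complex.cpow_neg]
    rw [hpow]
    simp only [Pi.neg_apply]
    field_simp
    ring
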